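/- For every reachable state (ξ₁, ξ₂) of the monitor DBA U(Gψ'), there exists a formula ξ such that ξ₁ ∧ ξ₂ is logically equivalent to ξ ∧ ψ'; consequently af(ξ₁, ν) ∧ af(ξ₂, ν) semantically entails af(ψ', ν) for every letter ν. -/
import Mathlib


/-- LTL formulas in negation normal form over atomic propositions `AP`:
`φ ::= tt | ff | a | ¬a | φ∧φ | φ∨φ | Xφ | Fφ | Gφ | φUφ`. -/
inductive LTL (AP : Type) : Type
  | tt : LTL AP
  | ff : LTL AP
  | atom : AP → LTL AP
  | natom : AP → LTL AP
  | conj : LTL AP → LTL AP → LTL AP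
  | disj : LTL AP → LTL AP → LTL AP
  | next : LTL AP → LTL AP
  | ev : LTL AP → LTL AP
  | alw : LTL AP → LTL AP
  | untl : LTL AP → LTL AP → LTL AP

variable {AP : Type}

/-- The suffix of an ω-word: `wordDrop k w = w(k) w(k+1) ⋯`. -/
def wordDrop (k : ℕ) (w : ℕ → Set AP) : ℕ → Set AP := fun i => w (i + k)

/-- Standard LTL semantics over ω-words (letters are sets of atomic propositions). -/
def Sat : (ℕ → Set AP) → LTL AP → Prop
  | _, .tt => True
  | _, .ff => False
  | w, .atom a => a ∈ w 0
  | w, .natom a => a ∉ w 0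
  | w, .conj φ ψ => Sat w φ ∧ Sat w ψ
  | w, .disj φ ψ => Sat w φ ∨ Sat w ψ
  | w, .next φ => Sat (wordDrop 1 w) φ
  | w, .ev φ => ∃ k, Sat (wordDrop k w) φ
  | w, .alw φ => ∀ k, Sat (wordDrop k w) φ
  | w, .untl φ ψ => ∃ k, Sat (wordDrop k w) ψ ∧ ∀ j < k, Sat (wordDrop j w) φ

open Classical in
/-- The "after" function `af(φ, ν)` for a single letter `ν`. -/
noncomputable def af : LTL AP → Set AP → LTL AP
  | .tt, _ => .tt
  | .ff, _ => .ff
  | .atom a, ν => if a ∈ ν then .tt else .ff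
  | .natom a, ν => if a ∈ ν then .ff else .tt
  | .conj φ ψ, ν => .conj (af φ ν) (af ψ ν)
  | .disj φ ψ, ν => .disj (af φ ν) (af ψ ν)
  | .next φ, _ => φ
  | .ev φ, ν => .disj (af φ ν) (.ev φ)
  | .alw φ, ν => .conj (af φ ν) (.alw φ)
  | .untl φ ψ, ν => .disj (af ψ ν) (.conj (af φ ν) (.untl φ ψ))

/-- `af` extended to finite words: `af(φ, ε) = φ`, `af(φ, νv) = af(af(φ,ν), v)`. -/
noncomputable def afWord : LTL AP → List (Set AP) → LTL AP
  | φ, [] => φ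
  | φ, ν :: v => afWord (af φ ν) v

/-- Prepend a finite word `v` to an ω-word `w`. -/
def prependWord (v : List (Set AP)) (w : ℕ → Set AP) : ℕ → Set AP :=
  fun i => if h : i < v.length then v.get ⟨i, h⟩ else w (i - v.length)

/-- Propositional evaluation of a formula: proper formulas (non-`∧`/`∨`) are treated
as propositional atoms, evaluated by the assignment `v`. -/
def propEval (v : LTL AP → Prop) : LTL AP → Prop
  | .tt => True
  | .ff => False
  | .conj φ ψ => propEval v φ ∧ propEval v ψ
  | .disj φ ψ => propEval v φ ∨ propEval v ψ
  | φ => v φ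

/-- Propositional equivalence `≡_P` of formulas. -/
def PropEquiv (φ ψ : LTL AP) : Prop := ∀ v, propEval v φ ↔ propEval v ψ

open Classical in
/-- The transition function of the monitor DBA `U(Gψ')`:
`δ((ξ₁,ξ₂), ν) = (af(ξ₂,ν) ∧ ψ', tt)` if `af(ξ₁,ν) ≡_P tt`, and
`(af(ξ₁,ν), af(ξ₂,ν) ∧ ψ')` otherwise. -/
noncomputable def monStep (ψ' : LTL AP) (p : LTL AP × LTL AP) (ν : Set AP) :
    LTL AP × LTL AP :=
  if PropEquiv (af p.1 ν) .tt then (.conj (af p.2 ν) ψ', .tt)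
  else (af p.1 ν, .conj (af p.2 ν) ψ')

/-- The unique run of the monitor from state `p` on the ω-word `w`. -/
noncomputable def monRun (ψ' : LTL AP) (p : LTL AP × LTL AP) (w : ℕ → Set AP) :
    ℕ → LTL AP × LTL AP
  | 0 => p
  | n + 1 => monStep ψ' (monRun ψ' p w n) (w n)

/-- The monitor accepts `w` from state `p`: infinitely many accepting transitions
(those with `af(ξ₁,ν) ≡_P tt`) are taken on the unique run from `p`. -/
noncomputable def MonAcceptsFrom (ψ' : LTL AP) (p : LTL AP × LTL AP)
    (w : ℕ → Set AP) : Prop :=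
  ∀ N, ∃ i, N ≤ i ∧ PropEquiv (af (monRun ψ' p w i).1 (w i)) .tt

/-- The states of the monitor DBA: pairs reachable from the initial state
`(ψ', tt)`. -/
inductive MonReach (ψ' : LTL AP) : LTL AP × LTL AP → Prop
  | init : MonReach ψ' (ψ', .tt)
  | step {p : LTL AP × LTL AP} {ν : Set AP} :
      MonReach ψ' p → MonReach ψ' (monStep ψ' p ν)

def consW (ν : Set AP) (w : ℕ → Set AP) : ℕ → Set AP
  | 0 => ν
  | n + 1 => w n

lemma drop_one_consW (ν : Set AP) (w : ℕ → Set AP) : wordDrop 1 (consW ν w) = w := rfl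

lemma drop_zero (w : ℕ → Set AP) : wordDrop 0 w = w := rfl

lemma drop_succ_consW (k : ℕ) (ν : Set AP) (w : ℕ → Set AP) :
    wordDrop (k + 1) (consW ν w) = wordDrop k w := rfl

lemma sat_af (φ : LTL AP) (ν : Set AP) (w : ℕ → Set AP) :
    Sat w (af φ ν) ↔ Sat (consW ν w) φ := by
  induction φ generalizing w with
  | tt => simp [af, Sat]
  | ff => simp [af, Sat]
  | atom a => by_cases h : a ∈ ν <;> simp [af, Sat, h, consW]
  | natom a => by_cases h : a ∈ ν <;> simp [af, Sat, h, consW]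
  | conj φ ψ ih1 ih2 => simp [af, Sat, ih1, ih2]
  | disj φ ψ ih1 ih2 => simp [af, Sat, ih1, ih2]
  | next φ ih =>
    show Sat w φ ↔ Sat (wordDrop 1 (consW ν w)) φ
    rw [drop_one_consW]
  | ev φ ih =>
    show Sat w (af φ ν) ∨ (∃ k, Sat (wordDrop k w) φ) ↔
      ∃ k, Sat (wordDrop k (consW ν w)) φ
    constructor
    · rintro (h | ⟨k, h⟩)
      · exact ⟨0, (ih _).mp h⟩
      · exact ⟨k + 1, h⟩
    · rintro ⟨(_ | k), h⟩
      · exact Or.inl ((ih _).mpr h)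
      · exact Or.inr ⟨k, h⟩
  | alw φ ih =>
    show Sat w (af φ ν) ∧ (∀ k, Sat (wordDrop k w) φ) ↔
      ∀ k, Sat (wordDrop k (consW ν w)) φ
    constructor
    · rintro ⟨h0, h⟩ (_ | k)
      · exact (ih _).mp h0
      · exact h k
    · intro h
      exact ⟨(ih _).mpr (h 0), fun k => h (k + 1)⟩
  | untl φ ψ ih1 ih2 =>
    show Sat w (af ψ ν) ∨ (Sat w (af φ ν) ∧
        ∃ k, Sat (wordDrop k w) ψ ∧ ∀ j < k, Sat (wordDrop j w) φ) ↔
      ∃ k, Sat (wordDrop k (consW ν w)) ψ ∧ ∀ j < k, Sat (wordDrop j (consW ν w)) φ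
    constructor
    · rintro (h | ⟨hφ, k, hψ, hall⟩)
      · exact ⟨0, (ih2 _).mp h, fun j hj => absurd hj (Nat.not_lt_zero j)⟩
      · refine ⟨k + 1, hψ, ?_⟩
        rintro (_ | j) hj
        · exact (ih1 w).mp hφ
        · exact hall j (Nat.lt_of_succ_lt_succ hj)
    · rintro ⟨(_ | k), hψ, hall⟩
      · exact Or.inl ((ih2 _).mpr hψ)
      · refine Or.inr ⟨(ih1 w).mpr (hall 0 (Nat.succ_pos k)), k, hψ, ?_⟩
        exact fun j hj => hall (j + 1) (Nat.succ_lt_succ hj)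

lemma mon_inv (ψ' : LTL AP) (p : LTL AP × LTL AP) (h : MonReach ψ' p) :
    ∃ ξ : LTL AP, ∀ w : ℕ → Set AP,
      Sat w (.conj p.1 p.2) ↔ Sat w (.conj ξ ψ') := by
  induction h with
  | init =>
    exact ⟨.tt, fun w => by simp [Sat]⟩
  | @step p ν h ih =>
    by_cases hc : PropEquiv (af p.1 ν) LTL.tt
    · refine ⟨af p.2 ν, fun w => ?_⟩
      simp [monStep, hc, Sat]
    · refine ⟨.conj (af p.1 ν) (af p.2 ν), fun w => ?_⟩
      simp [monStep, hc, Sat]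
      tauto

/-- For every reachable state `(ξ₁, ξ₂)` of the monitor DBA `U(Gψ')`, there exists a
formula `ξ` such that `ξ₁ ∧ ξ₂` is logically equivalent to `ξ ∧ ψ'`; consequently
`af(ξ₁, ν) ∧ af(ξ₂, ν)` semantically entails `af(ψ', ν)` for every letter `ν`. -/
theorem stmt_16 {AP : Type} (ψ' ξ₁ ξ₂ : LTL AP)
    (hreach : MonReach ψ' (ξ₁, ξ₂)) :
    (∃ ξ : LTL AP, ∀ w : ℕ → Set AP,
        Sat w (.conj ξ₁ ξ₂) ↔ Sat w (.conj ξ ψ')) ∧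
    (∀ (ν : Set AP) (w : ℕ → Set AP),
        Sat w (.conj (af ξ₁ ν) (af ξ₂ ν)) → Sat w (af ψ' ν)) := by
  obtain ⟨ξ, hξ⟩ := mon_inv ψ' (ξ₁, ξ₂) hreach
  refine ⟨⟨ξ, hξ⟩, ?_⟩
  intro ν w hs
  obtain ⟨h1, h2⟩ := hs
  have hc : Sat (consW ν w) (LTL.conj ξ₁ ξ₂) :=
    ⟨(sat_af _ _ _).mp h1, (sat_af _ _ _).mp h2⟩
  have := (hξ (consW ν w)).mp hc
  exact (sat_af _ _ _).mpr this.2
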